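/- Fix R > 0. For all sufficiently large n, any subset I ⊆ {0,...,2^n−1} with |I| ≥ 2^n·R contains an index i with wt(i) ≤ n/2 + c·√n, for some constant c depending only on R. Consequently, any polar code of length 2^n and rate at least R has minimum distance at most 2^{n/2 + c√n}. -/

import Mathlib

/-- Number of ones in the binary expansion. -/
def wt (i : ℕ) : ℕ := (Nat.digits 2 i).count 1

lemma wt_div2 (i : ℕ) : wt i = wt (i / 2) + i % 2 := by
  rcases Nat.eq_zero_or_pos i with h | h
  · simp [h, wt]
  · rw [wt, Nat.digits_def' (by norm_num : 1 < 2) h, List.count_cons]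
    rcases Nat.mod_two_eq_zero_or_one i with h2 | h2 <;> simp [h2, wt]

lemma wt_add_pow (n : ℕ) : ∀ i < 2 ^ n, wt (2 ^ n + i) = wt i + 1 := by
  induction n with
  | zero =>
    intro i hi
    interval_cases i
    simp [wt, Nat.digits_def' (by norm_num : 1 < 2)]
  | succ n ih =>
    intro i hi
    have hk : (0:ℕ) < 2 ^ n := Nat.pow_pos (by norm_num)
    have hpow : 2 ^ (n + 1) = 2 * 2 ^ n := by ring
    have hdiv : (2 ^ (n + 1) + i) / 2 = 2 ^ n + i / 2 := by omega
    have hmod : (2 ^ (n + 1) + i) % 2 = i % 2 := by omega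
    have hlt : i / 2 < 2 ^ n := by omega
    rw [wt_div2 (2 ^ (n + 1) + i), hdiv, hmod, ih _ hlt, wt_div2 i]
    omega

lemma sum_wt_sq (n : ℕ) :
    ∑ i ∈ Finset.range (2 ^ n), (2 * (wt i : ℤ) - n) ^ 2 = (n : ℤ) * 2 ^ n := by
  induction n with
  | zero => simp [wt]
  | succ n ih =>
    have hsplit : (2:ℕ) ^ (n + 1) = 2 ^ n + 2 ^ n := by ring
    rw [hsplit, Finset.sum_range_add]
    push_cast
    have e1 : ∀ i ∈ Finset.range (2 ^ n),
        (2 * (wt (2 ^ n + i) : ℤ) - (n + 1)) ^ 2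
          = (2 * (wt i : ℤ) - n) ^ 2 + 2 * (2 * (wt i : ℤ) - n) + 1 := by
      intro i hi
      rw [wt_add_pow n i (Finset.mem_range.mp hi)]
      push_cast
      ring
    have e2 : ∀ i ∈ Finset.range (2 ^ n),
        (2 * (wt i : ℤ) - (n + 1)) ^ 2
          = (2 * (wt i : ℤ) - n) ^ 2 - 2 * (2 * (wt i : ℤ) - n) + 1 := by
      intro i hi
      push_cast
      ring
    rw [Finset.sum_congr rfl e1, Finset.sum_congr rfl e2]
    have hsum : ∀ (g h : ℕ → ℤ), ∑ i ∈ Finset.range (2 ^ n), (g i + h i)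
        = ∑ i ∈ Finset.range (2 ^ n), g i + ∑ i ∈ Finset.range (2 ^ n), h i :=
      fun g h => Finset.sum_add_distrib
    simp only [Finset.sum_add_distrib, Finset.sum_sub_distrib, Finset.sum_const,
      Finset.card_range, ih]
    push_cast
    ring

theorem low_weight_index_exists (R : ℝ) (hR : 0 < R) :
    ∃ c : ℝ, ∃ N₀ : ℕ, ∀ n ≥ N₀, ∀ I : Finset ℕ, I ⊆ Finset.range (2^n) →
      (2:ℝ)^n * R ≤ I.card →
      ∃ i ∈ I, (wt i : ℝ) ≤ n / 2 + c * Real.sqrt n ∧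
        (2:ℝ) ^ (wt i : ℝ) ≤ (2:ℝ) ^ ((n:ℝ) / 2 + c * Real.sqrt n) := by
  set c : ℝ := 1 / Real.sqrt R with hc
  have hsqrtR : 0 < Real.sqrt R := Real.sqrt_pos.mpr hR
  have hcpos : 0 < c := by positivity
  have hcsq : c ^ 2 = 1 / R := by
    rw [hc, div_pow, one_pow, Real.sq_sqrt hR.le]
  refine ⟨c, 1, ?_⟩
  intro n hn I hI hcard
  have key : ∃ i ∈ I, (wt i : ℝ) ≤ n / 2 + c * Real.sqrt n := by
    by_contra hcon
    push_neg at hcon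
    -- real version of the second-moment identity
    have hsumR : ∑ i ∈ Finset.range (2 ^ n), (2 * (wt i : ℝ) - n) ^ 2
        = (n : ℝ) * 2 ^ n := by
      have := congrArg (fun z : ℤ => (z : ℝ)) (sum_wt_sq n)
      push_cast at this
      convert this using 2
    have hnpos : 0 < (n : ℝ) := by exact_mod_cast hn
    have hsqn : Real.sqrt n ^ 2 = n := Real.sq_sqrt (Nat.cast_nonneg n)
    -- each element of I contributes at least 4 c² n
    have hterm : ∀ i ∈ I, 4 * c ^ 2 * n ≤ (2 * (wt i : ℝ) - n) ^ 2 := by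
      intro i hi
      have h1 := hcon i hi
      have h2 : 2 * c * Real.sqrt n ≤ 2 * (wt i : ℝ) - n := by linarith
      have h3 : (0:ℝ) ≤ 2 * c * Real.sqrt n := by positivity
      have h4 : (2 * c * Real.sqrt n) ^ 2 ≤ (2 * (wt i : ℝ) - n) ^ 2 :=
        pow_le_pow_left₀ h3 h2 2
      calc 4 * c ^ 2 * n = (2 * c * Real.sqrt n) ^ 2 := by
            rw [mul_pow, mul_pow, hsqn]; ring
        _ ≤ _ := h4
    have hlow : (I.card : ℝ) * (4 * c ^ 2 * n)
        ≤ ∑ i ∈ I, (2 * (wt i : ℝ) - n) ^ 2 := by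
      have := Finset.card_nsmul_le_sum I (fun i => (2 * (wt i : ℝ) - n) ^ 2)
        (4 * c ^ 2 * n) hterm
      simpa [nsmul_eq_mul] using this
    have hup : ∑ i ∈ I, (2 * (wt i : ℝ) - n) ^ 2
        ≤ ∑ i ∈ Finset.range (2 ^ n), (2 * (wt i : ℝ) - n) ^ 2 :=
      Finset.sum_le_sum_of_subset_of_nonneg hI (fun i _ _ => sq_nonneg _)
    have hcn : (0:ℝ) ≤ 4 * c ^ 2 * n := by positivity
    have hIc : (2:ℝ) ^ n * R * (4 * c ^ 2 * n) ≤ (I.card : ℝ) * (4 * c ^ 2 * n) :=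
      mul_le_mul_of_nonneg_right hcard hcn
    have hfinal : (2:ℝ) ^ n * R * (4 * c ^ 2 * n) ≤ (n : ℝ) * 2 ^ n := by
      calc (2:ℝ) ^ n * R * (4 * c ^ 2 * n) ≤ (I.card : ℝ) * (4 * c ^ 2 * n) := hIc
        _ ≤ ∑ i ∈ I, (2 * (wt i : ℝ) - n) ^ 2 := hlow
        _ ≤ ∑ i ∈ Finset.range (2 ^ n), (2 * (wt i : ℝ) - n) ^ 2 := hup
        _ = (n : ℝ) * 2 ^ n := hsumR
    have hval : (2:ℝ) ^ n * R * (4 * c ^ 2 * n) = 4 * n * 2 ^ n := by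
      rw [hcsq]
      field_simp
    rw [hval] at hfinal
    have hpow2 : (0:ℝ) < 2 ^ n := by positivity
    nlinarith
  obtain ⟨i, hiI, hw⟩ := key
  exact ⟨i, hiI, hw, Real.rpow_le_rpow_of_exponent_le one_le_two hw⟩
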